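/- arXiv:2205.11506 — 3 statements merged into one kernel-verified Lean document; each statement's English description precedes it below -/
import Mathlib

section
/- Let N ≥ 2 and G ≥ 1 be integers with G dividing N. Let E be a real inner product space, v : Fin N → E a family of unit vectors (‖v x‖ = 1 for all x) with ⟨v x, v y⟩ ≥ 0 for all x, y, and c : Fin N → Fin G a cluster assignment each of whose fibers has exactly N/G elements. Let μ_g = (G/N) · Σ_{x : c x = g} v x denote the centroid of cluster g, and let δ ≥ 0 be a real number such that ⟨μ_g, v x⟩ ≤ δ whenever c x ≠ g. Then (1/(N(N−1))) · Σ_{x ≠ y} ⟨v x, v y⟩² ≤ (N/(N−1)) · (1/G + (1 − 1/G) · (2δ + (G−1)δ²)). -/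
open scoped RealInnerProductSpace
open Finset

/-- Bound on the negative-pair term of the empirical spectral contrastive loss
(core of Proposition 1): for `N ≥ 2` unit vectors with pairwise nonnegative
inner products, partitioned into `G` equally sized clusters with centroids
`μ g = (G/N) • ∑_{x : c x = g} v x` and inter-cluster mixing at most `δ`,
the average squared off-diagonal inner product is bounded by
`(N/(N−1)) · (1/G + (1 − 1/G)(2δ + (G−1)δ²))`. -/
theorem negative_pair_term_bound
    {E : Type*} [NormedAddCommGroup E] [InnerProductSpace ℝ E]
    (N G : ℕ) (hN : 2 ≤ N) (hG : 1 ≤ G) (hdvd : G ∣ N)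
    (v : Fin N → E) (hunit : ∀ x, ‖v x‖ = 1)
    (hnn : ∀ x y, 0 ≤ ⟪v x, v y⟫)
    (c : Fin N → Fin G)
    (hcard : ∀ g : Fin G, (univ.filter (fun x => c x = g)).card = N / G)
    (μ : Fin G → E)
    (hμ : ∀ g : Fin G, μ g = ((G : ℝ) / N) • ∑ x ∈ univ.filter (fun x => c x = g), v x)
    (δ : ℝ) (hδ : 0 ≤ δ)
    (hmix : ∀ (g : Fin G) (x : Fin N), c x ≠ g → ⟪μ g, v x⟫ ≤ δ) :
    (1 / ((N : ℝ) * ((N : ℝ) - 1))) *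
        ∑ x : Fin N, ∑ y ∈ univ \ {x}, ⟪v x, v y⟫ ^ 2 ≤
      ((N : ℝ) / ((N : ℝ) - 1)) *
        (1 / (G : ℝ) + (1 - 1 / (G : ℝ)) * (2 * δ + ((G : ℝ) - 1) * δ ^ 2)) := by
  have hGR : (1:ℝ) ≤ (G:ℝ) := by exact_mod_cast hG
  have hG0 : (0:ℝ) < G := lt_of_lt_of_le one_pos hGR
  have hNR : (2:ℝ) ≤ (N:ℝ) := by exact_mod_cast hN
  have hN0 : (0:ℝ) < N := lt_of_lt_of_le two_pos hNR
  have hcardR : ∀ g : Fin G, ((univ.filter (fun x => c x = g)).card : ℝ) = (N:ℝ) / G := by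
    intro g
    rw [hcard g, Nat.cast_div hdvd (by exact_mod_cast hG0.ne')]
  -- pairwise inner products at most 1
  have hle1 : ∀ x y, ⟪v x, v y⟫ ≤ 1 := by
    intro x y
    have h := real_inner_le_norm (v x) (v y)
    simpa [hunit] using h
  set w := ∑ x : Fin N, v x with hw
  -- Step 1: the off-diagonal sum of squares is at most the full sum of inner products
  have hS : ∑ x : Fin N, ∑ y ∈ univ \ {x}, ⟪v x, v y⟫ ^ 2 ≤
      ∑ x : Fin N, ∑ y : Fin N, ⟪v x, v y⟫ := by
    refine Finset.sum_le_sum fun x _ => ?_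
    calc ∑ y ∈ univ \ {x}, ⟪v x, v y⟫ ^ 2
        ≤ ∑ y ∈ univ \ {x}, ⟪v x, v y⟫ := by
          refine Finset.sum_le_sum fun y _ => ?_
          nlinarith [hnn x y, hle1 x y]
      _ ≤ ∑ y : Fin N, ⟪v x, v y⟫ :=
          Finset.sum_le_sum_of_subset_of_nonneg (Finset.sdiff_subset)
            (fun y _ _ => hnn x y)
  have hT : ∑ x : Fin N, ∑ y : Fin N, ⟪v x, v y⟫ = ⟪w, w⟫ := by
    rw [hw, sum_inner]
    exact Finset.sum_congr rfl fun x _ => (inner_sum _ _ _).symm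
  -- w as a sum of scaled centroids
  have hkey : ∀ g : Fin G, ((N:ℝ) / G) • μ g = ∑ x ∈ univ.filter (fun x => c x = g), v x := by
    intro g
    rw [hμ g, smul_smul]
    have : (N:ℝ) / G * ((G:ℝ) / N) = 1 := by field_simp
    rw [this, one_smul]
  have hwμ : w = ∑ g : Fin G, ((N:ℝ) / G) • μ g := by
    simp_rw [hkey, hw]
    exact (Finset.sum_fiberwise univ c v).symm
  -- bound the centroid Gram terms
  have hdiag : ∀ g : Fin G, ⟪μ g, μ g⟫ ≤ 1 := by
    intro g
    have hnorm : ‖μ g‖ ≤ 1 := by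
      rw [hμ g, norm_smul]
      have h1 : ‖∑ x ∈ univ.filter (fun x => c x = g), v x‖ ≤ (N:ℝ) / G := by
        calc ‖∑ x ∈ univ.filter (fun x => c x = g), v x‖
            ≤ ∑ x ∈ univ.filter (fun x => c x = g), ‖v x‖ := norm_sum_le _ _
          _ = (N:ℝ) / G := by simp [hunit, hcardR g]
      have h2 : ‖((G:ℝ) / N)‖ = (G:ℝ) / N := by
        rw [Real.norm_eq_abs, abs_of_nonneg (by positivity)]
      rw [h2]
      calc (G:ℝ) / N * ‖∑ x ∈ univ.filter (fun x => c x = g), v x‖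
          ≤ (G:ℝ) / N * ((N:ℝ) / G) := by
            exact mul_le_mul_of_nonneg_left h1 (by positivity)
        _ = 1 := by field_simp
    have := real_inner_self_eq_norm_sq (μ g)
    nlinarith [norm_nonneg (μ g)]
  have hoff : ∀ g h : Fin G, h ≠ g → ⟪μ g, μ h⟫ ≤ δ := by
    intro g h hgh
    rw [hμ h, real_inner_smul_right, inner_sum]
    have hsum : ∑ x ∈ univ.filter (fun x => c x = h), ⟪μ g, v x⟫ ≤ ((N:ℝ)/G) * δ := by
      calc ∑ x ∈ univ.filter (fun x => c x = h), ⟪μ g, v x⟫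
          ≤ ∑ _x ∈ univ.filter (fun x => c x = h), δ := by
            refine Finset.sum_le_sum fun x hx => ?_
            have hcx : c x = h := by simpa using hx
            exact hmix g x (by rw [hcx]; exact hgh)
        _ = ((N:ℝ)/G) * δ := by rw [Finset.sum_const, nsmul_eq_mul, hcardR h]
    calc (G:ℝ)/N * ∑ x ∈ univ.filter (fun x => c x = h), ⟪μ g, v x⟫
        ≤ (G:ℝ)/N * (((N:ℝ)/G) * δ) := mul_le_mul_of_nonneg_left hsum (by positivity)
      _ = δ := by field_simp
  -- the Gram matrix of scaled centroids
  have hww : ⟪w, w⟫ = ∑ g : Fin G, ∑ h : Fin G, ((N:ℝ)/G) * ((N:ℝ)/G) * ⟪μ g, μ h⟫ := by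
    rw [hwμ, sum_inner]
    refine Finset.sum_congr rfl fun g _ => ?_
    rw [inner_sum]
    refine Finset.sum_congr rfl fun h _ => ?_
    rw [real_inner_smul_left, real_inner_smul_right]
    ring
  have hGram : ∑ g : Fin G, ∑ h : Fin G, ⟪μ g, μ h⟫ ≤ (G:ℝ) * (1 + ((G:ℝ) - 1) * δ) := by
    calc ∑ g : Fin G, ∑ h : Fin G, ⟪μ g, μ h⟫
        ≤ ∑ _g : Fin G, (1 + ((G:ℝ) - 1) * δ) := by
          refine Finset.sum_le_sum fun g _ => ?_
          have hsplit : ∑ h : Fin G, ⟪μ g, μ h⟫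
              = ⟪μ g, μ g⟫ + ∑ h ∈ univ \ {g}, ⟪μ g, μ h⟫ := by
            exact Finset.sum_eq_add_sum_sdiff_singleton_of_mem (Finset.mem_univ g) _
          rw [hsplit]
          have h1 : ∑ h ∈ univ \ {g}, ⟪μ g, μ h⟫ ≤ ((G:ℝ) - 1) * δ := by
            calc ∑ h ∈ univ \ {g}, ⟪μ g, μ h⟫
                ≤ ∑ _h ∈ univ \ {g}, δ := by
                  refine Finset.sum_le_sum fun h hh => ?_
                  have : h ≠ g := by
                    simp only [Finset.mem_sdiff, Finset.mem_singleton] at hh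
                    exact hh.2
                  exact hoff g h this
              _ = ((G:ℝ) - 1) * δ := by
                  rw [Finset.sum_const, nsmul_eq_mul]
                  congr 1
                  rw [Finset.card_sdiff_of_subset (by simp), Finset.card_singleton, Finset.card_univ,
                    Fintype.card_fin, Nat.cast_sub hG, Nat.cast_one]
          linarith [hdiag g]
      _ = (G:ℝ) * (1 + ((G:ℝ) - 1) * δ) := by
          rw [Finset.sum_const, nsmul_eq_mul, Finset.card_univ, Fintype.card_fin]
  -- combine: the full sum is at most N² B
  have hmain : ∑ x : Fin N, ∑ y ∈ univ \ {x}, ⟪v x, v y⟫ ^ 2 ≤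
      (N:ℝ)^2 * (1 / (G:ℝ) + (1 - 1 / (G:ℝ)) * (2 * δ + ((G:ℝ) - 1) * δ ^ 2)) := by
    have h1 : ⟪w, w⟫ ≤ ((N:ℝ)/G) * ((N:ℝ)/G) * ((G:ℝ) * (1 + ((G:ℝ) - 1) * δ)) := by
      rw [hww]
      simp_rw [← Finset.mul_sum]
      exact mul_le_mul_of_nonneg_left hGram (by positivity)
    have h2 : ((N:ℝ)/G) * ((N:ℝ)/G) * ((G:ℝ) * (1 + ((G:ℝ) - 1) * δ)) ≤
        (N:ℝ)^2 * (1 / (G:ℝ) + (1 - 1 / (G:ℝ)) * (2 * δ + ((G:ℝ) - 1) * δ ^ 2)) := by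
      have hA : ((N:ℝ)/G) * ((N:ℝ)/G) * ((G:ℝ) * (1 + ((G:ℝ) - 1) * δ))
          = (N:ℝ)^2 * (1 / (G:ℝ) + (1 - 1 / (G:ℝ)) * δ) := by
        field_simp
      rw [hA]
      have hB : (1 - 1 / (G:ℝ)) * δ ≤ (1 - 1 / (G:ℝ)) * (2 * δ + ((G:ℝ) - 1) * δ ^ 2) := by
        have h1G : 1 / (G:ℝ) ≤ 1 := by
          rw [div_le_one hG0]; exact hGR
        have hpos : 0 ≤ 1 - 1 / (G:ℝ) := by linarith
        have : δ ≤ 2 * δ + ((G:ℝ) - 1) * δ ^ 2 := by nlinarith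
        exact mul_le_mul_of_nonneg_left this hpos
      nlinarith [sq_nonneg (N:ℝ)]
    calc ∑ x : Fin N, ∑ y ∈ univ \ {x}, ⟪v x, v y⟫ ^ 2
        ≤ ∑ x : Fin N, ∑ y : Fin N, ⟪v x, v y⟫ := hS
      _ = ⟪w, w⟫ := hT
      _ ≤ _ := le_trans h1 h2
  -- conclude
  have hN1 : (0:ℝ) < (N:ℝ) - 1 := by linarith
  have hc : 0 < 1 / ((N:ℝ) * ((N:ℝ) - 1)) := by positivity
  calc (1 / ((N:ℝ) * ((N:ℝ) - 1))) * ∑ x : Fin N, ∑ y ∈ univ \ {x}, ⟪v x, v y⟫ ^ 2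
      ≤ (1 / ((N:ℝ) * ((N:ℝ) - 1))) *
        ((N:ℝ)^2 * (1 / (G:ℝ) + (1 - 1 / (G:ℝ)) * (2 * δ + ((G:ℝ) - 1) * δ ^ 2))) :=
        mul_le_mul_of_nonneg_left hmain hc.le
    _ = ((N : ℝ) / ((N : ℝ) - 1)) *
        (1 / (G : ℝ) + (1 - 1 / (G : ℝ)) * (2 * δ + ((G : ℝ) - 1) * δ ^ 2)) := by
        field_simp
end

section
/- Let N ≥ 2 and G ≥ 1 be integers with G dividing N. Let E be a real inner product space, v : Fin N → E a family of unit vectors with ⟨v x, v y⟩ ≥ 0 for all x, y, c : Fin N → Fin G a cluster assignment each of whose fibers has exactly N/G elements, μ_g = (G/N) · Σ_{x : c x = g} v x the centroid of cluster g, and δ ≥ 0 such that ⟨μ_g, v x⟩ ≤ δ whenever c x ≠ g. Let ṽ : Fin N → E satisfy ṽ x = v x for all x. Then the empirical spectral contrastive loss L_spec(v, ṽ) := −2 · (1/N) · Σ_x ⟨v x, ṽ x⟩ + (1/(N(N−1))) · Σ_{x ≠ y} ⟨v x, v y⟩² satisfies L_spec(v, ṽ) ≤ −2 + (N/(N−1))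 · (1/G + (1 − 1/G) · (2δ + (G−1)δ²)). -/
open scoped RealInnerProductSpace
open Finset

/-- Combined conclusion of the proof of Proposition 1: for unit-normalized
cluster-similarity features `v` that are invariant to augmentations (`v' = v`)
and partition into `G` equally sized clusters with inter-cluster mixing `δ`,
the empirical spectral contrastive loss is at most
`−2 + (N/(N−1))(1/G + (1 − 1/G)(2δ + (G−1)δ²))`. -/
theorem spec_loss_upper_bound
    {E : Type*} [NormedAddCommGroup E] [InnerProductSpace ℝ E]
    (N G : ℕ) (hN : 2 ≤ N) (hG : 1 ≤ G) (hdvd : G ∣ N)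
    (v : Fin N → E) (hunit : ∀ x, ‖v x‖ = 1)
    (hnn : ∀ x y, 0 ≤ ⟪v x, v y⟫)
    (c : Fin N → Fin G)
    (hcard : ∀ g : Fin G, (univ.filter (fun x => c x = g)).card = N / G)
    (μ : Fin G → E)
    (hμ : ∀ g : Fin G, μ g = ((G : ℝ) / N) • ∑ x ∈ univ.filter (fun x => c x = g), v x)
    (δ : ℝ) (hδ : 0 ≤ δ)
    (hmix : ∀ (g : Fin G) (x : Fin N), c x ≠ g → ⟪μ g, v x⟫ ≤ δ)
    (v' : Fin N → E) (haug : ∀ x, v' x = v x) :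
    -2 * ((1 : ℝ) / N) * ∑ x : Fin N, ⟪v x, v' x⟫ +
        (1 / ((N : ℝ) * ((N : ℝ) - 1))) *
          ∑ x : Fin N, ∑ y ∈ univ \ {x}, ⟪v x, v y⟫ ^ 2 ≤
      -2 + ((N : ℝ) / ((N : ℝ) - 1)) *
        (1 / (G : ℝ) + (1 - 1 / (G : ℝ)) * (2 * δ + ((G : ℝ) - 1) * δ ^ 2)) := by
  have hG0 : (0:ℝ) < (G:ℝ) := by exact_mod_cast hG
  have hN0 : (0:ℝ) < (N:ℝ) := by positivity
  have hN1 : (1:ℝ) < (N:ℝ) := by exact_mod_cast hN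
  have hNG : ((N / G : ℕ) : ℝ) = (N:ℝ) / (G:ℝ) := by
    rw [Nat.cast_div hdvd (by exact_mod_cast hG0.ne')]
  -- first term equals -2
  have h1 : ∀ x, ⟪v x, v' x⟫ = (1:ℝ) := by
    intro x
    rw [haug, real_inner_self_eq_norm_sq, hunit, one_pow]
  have hfirst : -2 * ((1 : ℝ) / N) * ∑ x : Fin N, ⟪v x, v' x⟫ = -2 := by
    simp only [h1, Finset.sum_const, card_univ, Fintype.card_fin, nsmul_eq_mul, mul_one]
    field_simp
  -- inner products at most 1
  have hle1 : ∀ x y, ⟪v x, v y⟫ ≤ 1 := by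
    intro x y
    calc ⟪v x, v y⟫ ≤ ‖v x‖ * ‖v y‖ := real_inner_le_norm _ _
    _ = 1 := by rw [hunit, hunit, one_mul]
  -- centroid norm at most 1
  have hμnorm : ∀ g, ‖μ g‖ ≤ 1 := by
    intro g
    have hsq : ‖μ g‖ ^ 2 ≤ ‖μ g‖ := by
      rw [← real_inner_self_eq_norm_sq]
      calc ⟪μ g, μ g⟫ = ((G:ℝ)/N) * ∑ x ∈ univ.filter (fun x => c x = g), ⟪μ g, v x⟫ := by
            rw [hμ g, inner_smul_right, inner_sum]
      _ ≤ ((G:ℝ)/N) * ∑ x ∈ univ.filter (fun x => c x = g), ‖μ g‖ := by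
            apply mul_le_mul_of_nonneg_left _ (by positivity)
            apply Finset.sum_le_sum
            intro x _
            calc ⟪μ g, v x⟫ ≤ ‖μ g‖ * ‖v x‖ := real_inner_le_norm _ _
            _ = ‖μ g‖ := by rw [hunit, mul_one]
      _ = ‖μ g‖ := by
            rw [Finset.sum_const, hcard, nsmul_eq_mul, hNG]
            field_simp
    nlinarith [norm_nonneg (μ g)]
  -- sum over a cluster of inner products with v x
  have hcluster : ∀ (x : Fin N) (g : Fin G),
      ∑ y ∈ univ.filter (fun y => c y = g), ⟪v x, v y⟫ = ((N:ℝ)/G) * ⟪μ g, v x⟫ := by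
    intro x g
    have : ⟪μ g, v x⟫ = ((G:ℝ)/N) * ∑ y ∈ univ.filter (fun y => c y = g), ⟪v x, v y⟫ := by
      rw [hμ g, inner_smul_left, sum_inner, RCLike.conj_to_real]
      congr 1
      exact Finset.sum_congr rfl fun y _ => real_inner_comm _ _
    rw [this]
    field_simp
  -- bound the double sum
  have hS : ∑ x : Fin N, ∑ y ∈ univ \ {x}, ⟪v x, v y⟫ ^ 2 ≤
      (N:ℝ) * (((N:ℝ)/G) * (1 + ((G:ℝ) - 1) * δ)) := by
    have hx : ∀ x : Fin N, ∑ y ∈ univ \ {x}, ⟪v x, v y⟫ ^ 2 ≤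
        ((N:ℝ)/G) * (1 + ((G:ℝ) - 1) * δ) := by
      intro x
      calc ∑ y ∈ univ \ {x}, ⟪v x, v y⟫ ^ 2
          ≤ ∑ y : Fin N, ⟪v x, v y⟫ ^ 2 := by
            apply Finset.sum_le_sum_of_subset_of_nonneg (Finset.sdiff_subset)
            intro y _ _; positivity
      _ ≤ ∑ y : Fin N, ⟪v x, v y⟫ := by
            apply Finset.sum_le_sum
            intro y _
            nlinarith [hnn x y, hle1 x y]
      _ = ∑ g : Fin G, ∑ y ∈ univ.filter (fun y => c y = g), ⟪v x, v y⟫ := by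
            exact (Finset.sum_fiberwise_of_maps_to (fun y _ => Finset.mem_univ (c y)) _).symm
      _ = ∑ g : Fin G, ((N:ℝ)/G) * ⟪μ g, v x⟫ := by
            exact Finset.sum_congr rfl fun g _ => hcluster x g
      _ = ((N:ℝ)/G) * ⟪μ (c x), v x⟫ +
            ∑ g ∈ univ \ {c x}, ((N:ℝ)/G) * ⟪μ g, v x⟫ := by
            exact Finset.sum_eq_add_sum_sdiff_singleton_of_mem (Finset.mem_univ (c x)) _
      _ ≤ ((N:ℝ)/G) * 1 + ∑ g ∈ univ \ {c x}, ((N:ℝ)/G) * δ := by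
            apply add_le_add
            · apply mul_le_mul_of_nonneg_left _ (by positivity)
              calc ⟪μ (c x), v x⟫ ≤ ‖μ (c x)‖ * ‖v x‖ := real_inner_le_norm _ _
              _ ≤ 1 := by rw [hunit, mul_one]; exact hμnorm _
            · apply Finset.sum_le_sum
              intro g hg
              have hgne : c x ≠ g := by
                intro h
                simp [h] at hg
              exact mul_le_mul_of_nonneg_left (hmix g x hgne) (by positivity)
      _ = ((N:ℝ)/G) * (1 + ((G:ℝ) - 1) * δ) := by
            rw [Finset.sum_const, Finset.card_sdiff_of_subset (by simp), card_univ,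
              Fintype.card_fin, Finset.card_singleton, nsmul_eq_mul]
            push_cast [hG]
            ring
    calc ∑ x : Fin N, ∑ y ∈ univ \ {x}, ⟪v x, v y⟫ ^ 2
        ≤ ∑ _x : Fin N, ((N:ℝ)/G) * (1 + ((G:ℝ) - 1) * δ) :=
          Finset.sum_le_sum fun x _ => hx x
    _ = (N:ℝ) * (((N:ℝ)/G) * (1 + ((G:ℝ) - 1) * δ)) := by
          rw [Finset.sum_const, card_univ, Fintype.card_fin, nsmul_eq_mul]
  -- conclude
  rw [hfirst]
  have hcoef : (0:ℝ) < 1 / ((N:ℝ) * ((N:ℝ) - 1)) := by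
    apply div_pos one_pos
    nlinarith
  have h2 : (1 / ((N:ℝ) * ((N:ℝ) - 1))) *
      ∑ x : Fin N, ∑ y ∈ univ \ {x}, ⟪v x, v y⟫ ^ 2 ≤
      (1 / ((N:ℝ) * ((N:ℝ) - 1))) * ((N:ℝ) * (((N:ℝ)/G) * (1 + ((G:ℝ) - 1) * δ))) :=
    mul_le_mul_of_nonneg_left hS hcoef.le
  have h3 : (1 / ((N:ℝ) * ((N:ℝ) - 1))) * ((N:ℝ) * (((N:ℝ)/G) * (1 + ((G:ℝ) - 1) * δ))) ≤
      ((N : ℝ) / ((N : ℝ) - 1)) *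
        (1 / (G : ℝ) + (1 - 1 / (G : ℝ)) * (2 * δ + ((G : ℝ) - 1) * δ ^ 2)) := by
    have hN1' : (0:ℝ) < (N:ℝ) - 1 := by linarith
    have heq : (1/((N:ℝ)*((N:ℝ)-1))) * ((N:ℝ) * ((N:ℝ)/G * (1+((G:ℝ)-1)*δ))) =
        ((N:ℝ)/((N:ℝ)-1)) * ((1+((G:ℝ)-1)*δ)/G) := by field_simp
    have hexp : 1/(G:ℝ) + (1-1/(G:ℝ))*(2*δ+((G:ℝ)-1)*δ^2) =
        (1 + ((G:ℝ)-1)*(2*δ+((G:ℝ)-1)*δ^2))/G := by field_simp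
    rw [heq, hexp]
    apply mul_le_mul_of_nonneg_left _ (by positivity)
    rw [div_le_div_iff₀ hG0 hG0]
    have hg1 : (1:ℝ) ≤ (G:ℝ) := by exact_mod_cast hG
    have h1g : (0:ℝ) ≤ (G:ℝ) - 1 := sub_nonneg.2 hg1
    nlinarith [mul_nonneg (mul_nonneg hG0.le h1g) hδ,
      mul_nonneg (mul_nonneg (mul_nonneg hG0.le h1g) h1g) (sq_nonneg δ)]
  linarith
end

section
/- Let N ≥ 2 and G ≥ 1 be integers with G dividing N. Let E be a real inner product space, v : Fin N → E a family of unit vectors with ⟨v x, v y⟩ ≥ 0 for all x, y, c : Fin N → Fin G a cluster assignment each of whose fibers has exactly N/G elements, μ_g = (G/N) · Σ_{x : c x = g} v x, and δ ≥ 0 such that ⟨μ_g, v x⟩ ≤ δ whenever c x ≠ g; let ṽ : Fin N → E satisfy ṽ x = v x for all x. Then for every u, ũ : Fin N → E with ‖u x‖ ≤ 1 and ‖ũ x‖ ≤ 1 for all x, the empirical spectral contrastive loss L_spec(w, w̃) := −2 · (1/N) · Σ_x ⟨w x, w̃ x⟩ + (1/(N(N−1))) · Σ_{x ≠ y} ⟨w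 x, w y⟩² satisfies L_spec(v, ṽ) ≤ L_spec(u, ũ) + (N/(N−1)) · (1/G + (1 − 1/G) · (2δ + (G−1)δ²)). -/
open scoped RealInnerProductSpace
open Finset

lemma spec_aux (n g δ A U T Sv : ℝ) (hn : 2 ≤ n) (hg : 1 ≤ g) (hδ : 0 ≤ δ)
    (hA : A ≤ n * (n/g + (g-1)*(n/g*δ))) (hU : 0 ≤ U) (hT : T ≤ n) (hSv : Sv = n) :
    -2*(1/n)*Sv + (1/(n*(n-1)))*A ≤
      (-2*(1/n)*T + (1/(n*(n-1)))*U) +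
        (n/(n-1))*(1/g + (1-1/g)*(2*δ+(g-1)*δ^2)) := by
  have hg0 : (0:ℝ) < g := by linarith
  have hgne : g ≠ 0 := ne_of_gt hg0
  have hn0 : (0:ℝ) < n := by linarith
  have hnne : n ≠ 0 := ne_of_gt hn0
  have hn1ne : n - 1 ≠ 0 := by intro h; nlinarith
  have h0 : (0:ℝ) ≤ g - 1 := by linarith
  have h1 : (0:ℝ) ≤ δ + (g-1)*δ^2 := add_nonneg hδ (mul_nonneg h0 (sq_nonneg δ))
  have heq : n^2 * (1/g + (1-1/g)*(2*δ+(g-1)*δ^2)) - n * (n/g + (g-1)*(n/g*δ))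
      = n^2 * ((g-1)/g) * (δ + (g-1)*δ^2) := by
    field_simp; ring
  have h2 : (0:ℝ) ≤ n^2 * ((g-1)/g) * (δ + (g-1)*δ^2) :=
    mul_nonneg (mul_nonneg (sq_nonneg n) (div_nonneg h0 (le_of_lt hg0))) h1
  have hAB : A ≤ n^2 * (1/g + (1-1/g)*(2*δ+(g-1)*δ^2)) := by linarith
  have hc0 : (0:ℝ) < n * (n - 1) := by nlinarith
  have h4 : (1 / (n * (n-1))) * A ≤ (n / (n-1)) * (1/g + (1-1/g)*(2*δ+(g-1)*δ^2)) := by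
    have h5 : (1 / (n * (n-1))) * A ≤ (1 / (n * (n-1))) * (n^2 * (1/g + (1-1/g)*(2*δ+(g-1)*δ^2))) :=
      mul_le_mul_of_nonneg_left hAB (by positivity)
    have h6 : (1 / (n * (n-1))) * (n^2 * (1/g + (1-1/g)*(2*δ+(g-1)*δ^2)))
        = (n / (n-1)) * (1/g + (1-1/g)*(2*δ+(g-1)*δ^2)) := by
      field_simp
    linarith
  have h7 : -2 * (1/n) * Sv = -2 := by rw [hSv]; field_simp
  have h8 : -2 ≤ -2 * (1/n) * T := by
    have h := mul_le_mul_of_nonneg_left hT (le_of_lt (show (0:ℝ) < 2/n by positivity))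
    have hh : (2/n) * n = 2 := by field_simp
    nlinarith
  have h9 : (0:ℝ) ≤ (1 / (n * (n-1))) * U := mul_nonneg (by positivity) hU
  linarith

/-- Empirical form of the ε-near-optimality condition in Proposition 1: a model
whose unit-normalized cluster-similarity features `v` are invariant to
augmentations (`v' = v`) and partition the data into `G` equally sized clusters
with inter-cluster mixing `δ` comes within
`ε = (N/(N−1))(1/G + (1 − 1/G)(2δ + (G−1)δ²))` of the minimum of the empirical
spectral contrastive loss over all feature families of norm at most `1`. -/
theorem spec_loss_near_optimal
    {E : Type*} [NormedAddCommGroup E] [InnerProductSpace ℝ E]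
    (N G : ℕ) (hN : 2 ≤ N) (hG : 1 ≤ G) (hdvd : G ∣ N)
    (v : Fin N → E) (hunit : ∀ x, ‖v x‖ = 1)
    (hnn : ∀ x y, 0 ≤ ⟪v x, v y⟫)
    (c : Fin N → Fin G)
    (hcard : ∀ g : Fin G, (univ.filter (fun x => c x = g)).card = N / G)
    (μ : Fin G → E)
    (hμ : ∀ g : Fin G, μ g = ((G : ℝ) / N) • ∑ x ∈ univ.filter (fun x => c x = g), v x)
    (δ : ℝ) (hδ : 0 ≤ δ)
    (hmix : ∀ (g : Fin G) (x : Fin N), c x ≠ g → ⟪μ g, v x⟫ ≤ δ)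
    (v' : Fin N → E) (haug : ∀ x, v' x = v x) :
    ∀ u u' : Fin N → E, (∀ x, ‖u x‖ ≤ 1) → (∀ x, ‖u' x‖ ≤ 1) →
      -2 * ((1 : ℝ) / N) * ∑ x : Fin N, ⟪v x, v' x⟫ +
          (1 / ((N : ℝ) * ((N : ℝ) - 1))) *
            ∑ x : Fin N, ∑ y ∈ univ \ {x}, ⟪v x, v y⟫ ^ 2 ≤
        (-2 * ((1 : ℝ) / N) * ∑ x : Fin N, ⟪u x, u' x⟫ +
          (1 / ((N : ℝ) * ((N : ℝ) - 1))) *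
            ∑ x : Fin N, ∑ y ∈ univ \ {x}, ⟪u x, u y⟫ ^ 2) +
        ((N : ℝ) / ((N : ℝ) - 1)) *
          (1 / (G : ℝ) + (1 - 1 / (G : ℝ)) * (2 * δ + ((G : ℝ) - 1) * δ ^ 2)) := by
  intro u u' hu hu'
  have hG0 : (0:ℝ) < G := by exact_mod_cast hG
  have hG1 : (1:ℝ) ≤ G := by exact_mod_cast hG
  have hN2 : (2:ℝ) ≤ N := by exact_mod_cast hN
  have hn1 : (1:ℝ) < N := by linarith
  have hn0 : (0:ℝ) < N := by linarith
  have hgne : (G:ℝ) ≠ 0 := ne_of_gt hG0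
  have hnne : (N:ℝ) ≠ 0 := ne_of_gt hn0
  have hn1ne : (N:ℝ) - 1 ≠ 0 := by linarith
  have hcardR : ∀ g : Fin G, ((univ.filter (fun x => c x = g)).card : ℝ) = (N:ℝ)/G := by
    intro g
    rw [hcard g, Nat.cast_div hdvd hgne]
  -- basic inner product bounds
  have hle1 : ∀ x y : Fin N, ⟪v x, v y⟫ ≤ 1 := by
    intro x y
    have h := real_inner_le_norm (v x) (v y)
    rw [hunit x, hunit y] at h; linarith
  have hsq_le : ∀ x y : Fin N, ⟪v x, v y⟫ ^ 2 ≤ ⟪v x, v y⟫ := by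
    intro x y; nlinarith [hnn x y, hle1 x y]
  have hsq1 : ∀ x y : Fin N, ⟪v x, v y⟫ ^ 2 ≤ 1 := by
    intro x y; nlinarith [hnn x y, hle1 x y]
  -- per-row bound
  have hrow : ∀ x : Fin N, ∑ y : Fin N, ⟪v x, v y⟫ ^ 2 ≤
      (N:ℝ)/G + ((G:ℝ)-1) * ((N:ℝ)/G * δ) := by
    intro x
    have hpart : ∑ y : Fin N, ⟪v x, v y⟫ ^ 2
        = ∑ g : Fin G, ∑ y ∈ univ.filter (fun y => c y = g), ⟪v x, v y⟫ ^ 2 :=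
      (Finset.sum_fiberwise _ _ _).symm
    have hsame : ∑ y ∈ univ.filter (fun y => c y = c x), ⟪v x, v y⟫ ^ 2 ≤ (N:ℝ)/G := by
      calc ∑ y ∈ univ.filter (fun y => c y = c x), ⟪v x, v y⟫ ^ 2
          ≤ ∑ _y ∈ univ.filter (fun y => c y = c x), (1:ℝ) :=
            Finset.sum_le_sum (fun y _ => hsq1 x y)
        _ = (N:ℝ)/G := by
            rw [Finset.sum_const, nsmul_eq_mul, mul_one, hcardR]
    have hother : ∀ g : Fin G, g ≠ c x →
        ∑ y ∈ univ.filter (fun y => c y = g), ⟪v x, v y⟫ ^ 2 ≤ (N:ℝ)/G * δ := by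
      intro g hg
      have h1 : ∑ y ∈ univ.filter (fun y => c y = g), ⟪v x, v y⟫ ^ 2
          ≤ ∑ y ∈ univ.filter (fun y => c y = g), ⟪v x, v y⟫ :=
        Finset.sum_le_sum fun y _ => hsq_le x y
      have h2 : ⟪μ g, v x⟫ = ((G:ℝ)/N) * ∑ y ∈ univ.filter (fun y => c y = g), ⟪v y, v x⟫ := by
        rw [hμ g, real_inner_smul_left, sum_inner]
      have h3 : ⟪μ g, v x⟫ ≤ δ := hmix g x (Ne.symm hg)
      have h4 : ∑ y ∈ univ.filter (fun y => c y = g), ⟪v x, v y⟫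
          = (N:ℝ)/G * ⟪μ g, v x⟫ := by
        have hcomm : ∑ y ∈ univ.filter (fun y => c y = g), ⟪v x, v y⟫
            = ∑ y ∈ univ.filter (fun y => c y = g), ⟪v y, v x⟫ :=
          Finset.sum_congr rfl fun y _ => real_inner_comm _ _
        rw [hcomm, h2]
        field_simp
      have h5 : (N:ℝ)/G * ⟪μ g, v x⟫ ≤ (N:ℝ)/G * δ :=
        mul_le_mul_of_nonneg_left h3 (by positivity)
      linarith
    have hkey := Finset.add_sum_erase univ
      (fun g => ∑ y ∈ univ.filter (fun y => c y = g), ⟪v x, v y⟫ ^ 2) (mem_univ (c x))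
    have herase : ∑ g ∈ univ.erase (c x),
        ∑ y ∈ univ.filter (fun y => c y = g), ⟪v x, v y⟫ ^ 2
        ≤ ((G:ℝ)-1) * ((N:ℝ)/G * δ) := by
      calc ∑ g ∈ univ.erase (c x), ∑ y ∈ univ.filter (fun y => c y = g), ⟪v x, v y⟫ ^ 2
          ≤ ∑ _g ∈ univ.erase (c x), ((N:ℝ)/G * δ) :=
            Finset.sum_le_sum fun g hg => hother g (Finset.ne_of_mem_erase hg)
        _ = ((G:ℝ)-1) * ((N:ℝ)/G * δ) := by
            rw [Finset.sum_const, nsmul_eq_mul, Finset.card_erase_of_mem (mem_univ _),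
              Finset.card_univ, Fintype.card_fin]
            rw [Nat.cast_sub hG]
            norm_num
    rw [hpart, ← hkey]
    linarith
  -- full double-sum bound
  have hA : ∑ x : Fin N, ∑ y ∈ univ \ {x}, ⟪v x, v y⟫ ^ 2
      ≤ (N:ℝ) * ((N:ℝ)/G + ((G:ℝ)-1) * ((N:ℝ)/G * δ)) := by
    calc ∑ x : Fin N, ∑ y ∈ univ \ {x}, ⟪v x, v y⟫ ^ 2
        ≤ ∑ x : Fin N, ∑ y : Fin N, ⟪v x, v y⟫ ^ 2 :=
          Finset.sum_le_sum fun x _ =>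
            Finset.sum_le_sum_of_subset_of_nonneg (Finset.sdiff_subset)
              (fun y _ _ => sq_nonneg _)
      _ ≤ ∑ _x : Fin N, ((N:ℝ)/G + ((G:ℝ)-1) * ((N:ℝ)/G * δ)) :=
          Finset.sum_le_sum fun x _ => hrow x
      _ = (N:ℝ) * ((N:ℝ)/G + ((G:ℝ)-1) * ((N:ℝ)/G * δ)) := by
          rw [Finset.sum_const, nsmul_eq_mul, Finset.card_univ, Fintype.card_fin]
  -- linear terms
  have hvv : ∑ x : Fin N, ⟪v x, v' x⟫ = (N:ℝ) := by
    have h1 : ∀ x : Fin N, ⟪v x, v' x⟫ = 1 := by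
      intro x
      rw [haug x, real_inner_self_eq_norm_sq, hunit x]; norm_num
    rw [Finset.sum_congr rfl fun x _ => h1 x, Finset.sum_const, nsmul_eq_mul,
      Finset.card_univ, Fintype.card_fin, mul_one]
  have huu : ∑ x : Fin N, ⟪u x, u' x⟫ ≤ (N:ℝ) := by
    calc ∑ x : Fin N, ⟪u x, u' x⟫ ≤ ∑ _x : Fin N, (1:ℝ) := by
          refine Finset.sum_le_sum fun x _ => ?_
          have h := real_inner_le_norm (u x) (u' x)
          nlinarith [hu x, hu' x, norm_nonneg (u x), norm_nonneg (u' x)]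
      _ = (N:ℝ) := by simp
  have hU : (0:ℝ) ≤ ∑ x : Fin N, ∑ y ∈ univ \ {x}, ⟪u x, u y⟫ ^ 2 :=
    Finset.sum_nonneg fun x _ => Finset.sum_nonneg fun y _ => sq_nonneg _
  exact spec_aux (N:ℝ) (G:ℝ) δ _ _ _ _ hN2 hG1 hδ hA hU huu hvv
end
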